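/- Let X be a locally compact Hausdorff space, A a topological abelian group, and X₁, X₂ ⊆ X clopen subsets with X = X₁ ∪ X₂; set X₁₂ := X₁ ∩ X₂. Define α : C_c(X₁₂, A) → C_c(X₁, A) ⊕ C_c(X₂, A) by α(ζ) := (ζ^{(1)}, −ζ^{(2)}), where ζ^{(i)} denotes extension by zero along the clopen inclusion X₁₂ ⊆ X_i, and define β : C_c(X₁, A) ⊕ C_c(X₂, A) → C_c(X, A) by β(ζ₁, ζ₂) := ζ̃₁ + ζ̃₂, where ζ̃_i denotes extension by zero along the clopen inclusion X_i ⊆ X. Then the sequence 0 → C_c(X₁₂, A) →^α C_c(X₁, A) ⊕ C_c(X₂, A) →^β C_c(X, A) → 0 is exact: α is injective, the kernel of β equals the image of α, and β is surjective. (Lemma 3.3.8.) -/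

import Mathlib

open Set Function Classical

noncomputable section
open scoped Classical

/-- Extension by zero of a function defined on a subset `S ⊆ X` to all of `X`. -/
noncomputable def extendZero {X A : Type*} [Zero A] (S : Set X) (g : S → A) : X → A :=
  fun x => if h : x ∈ S then g ⟨x, h⟩ else 0

/-- Extension by zero of a function defined on a subset `S ⊆ X` to a larger subset
`T ⊆ X`. -/
noncomputable def extendZeroIn {X A : Type*} [Zero A] (S T : Set X) (g : S → A) : T → A :=
  fun x => if h : (x : X) ∈ S then g ⟨x, h⟩ else 0

lemma isClosedEmbedding_inclusion' {X : Type*} [TopologicalSpace X] {s t : Set X}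
    (h : s ⊆ t) (hs : IsClosed s) : Topology.IsClosedEmbedding (Set.inclusion h) := by
  refine ⟨Topology.IsEmbedding.inclusion h, ?_⟩
  rw [Set.range_inclusion]
  exact hs.preimage continuous_subtype_val

/-- **Lemma 3.3.8** (clopen Mayer–Vietoris for compactly supported chains). Let `X` be a
locally compact Hausdorff space, `A` a topological abelian group, and `X₁, X₂ ⊆ X` clopen
with `X = X₁ ∪ X₂`; set `X₁₂ = X₁ ∩ X₂`. With `α(ζ) = (ζ⁽¹⁾, -ζ⁽²⁾)` (extensions by zero
along `X₁₂ ⊆ Xᵢ`) and `β(ζ₁, ζ₂) = ζ̃₁ + ζ̃₂` (extensions by zero along `Xᵢ ⊆ X`), the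
sequence `0 → C_c(X₁₂, A) → C_c(X₁, A) ⊕ C_c(X₂, A) → C_c(X, A) → 0` is exact:
`α` is injective, `ker β = im α`, and `β` is surjective. -/
theorem clopen_mayerVietoris_exact {X A : Type*} [TopologicalSpace X]
    [LocallyCompactSpace X] [T2Space X]
    [AddCommGroup A] [TopologicalSpace A] [IsTopologicalAddGroup A]
    (X₁ X₂ : Set X) (h₁ : IsClopen X₁) (h₂ : IsClopen X₂) (hcover : X₁ ∪ X₂ = Set.univ) :
    -- α is injective
    (∀ ζ : (X₁ ∩ X₂ : Set X) → A, Continuous ζ → HasCompactSupport ζ →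
        extendZeroIn (X₁ ∩ X₂) X₁ ζ = 0 → -(extendZeroIn (X₁ ∩ X₂) X₂ ζ) = 0 →
        ζ = 0) ∧
    -- ker β = im α
    (∀ (ζ₁ : X₁ → A) (ζ₂ : X₂ → A), Continuous ζ₁ → HasCompactSupport ζ₁ →
        Continuous ζ₂ → HasCompactSupport ζ₂ →
        (extendZero X₁ ζ₁ + extendZero X₂ ζ₂ = 0 ↔
          ∃ ζ : (X₁ ∩ X₂ : Set X) → A, Continuous ζ ∧ HasCompactSupport ζ ∧
            ζ₁ = extendZeroIn (X₁ ∩ X₂) X₁ ζ ∧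
            ζ₂ = -(extendZeroIn (X₁ ∩ X₂) X₂ ζ))) ∧
    -- β is surjective
    (∀ η : X → A, Continuous η → HasCompactSupport η →
        ∃ (ζ₁ : X₁ → A) (ζ₂ : X₂ → A),
          Continuous ζ₁ ∧ HasCompactSupport ζ₁ ∧ Continuous ζ₂ ∧ HasCompactSupport ζ₂ ∧
          extendZero X₁ ζ₁ + extendZero X₂ ζ₂ = η) := by
  have hsub₁ : X₁ ∩ X₂ ⊆ X₁ := Set.inter_subset_left
  have hsub₂ : X₁ ∩ X₂ ⊆ X₂ := Set.inter_subset_right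
  refine ⟨?_, ?_, ?_⟩
  · -- injectivity
    intro ζ _ _ hz _
    funext x
    have := congrFun hz (Set.inclusion hsub₁ x)
    simpa [extendZeroIn, x.2.1, x.2.2] using this
  · -- ker β = im α
    intro ζ₁ ζ₂ hc₁ hs₁ hc₂ hs₂
    constructor
    · intro hsum
      refine ⟨ζ₁ ∘ Set.inclusion hsub₁, hc₁.comp (continuous_inclusion hsub₁),
        hs₁.comp_isClosedEmbedding (isClosedEmbedding_inclusion' hsub₁
          (h₁.isClosed.inter h₂.isClosed)), ?_, ?_⟩
      · funext x
        by_cases hx : (x : X) ∈ X₂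
        · simp [extendZeroIn, hx, x.2, Set.inclusion]
        · -- x ∈ X₁ \ X₂ : ζ₁ x = 0 from sum
          have := congrFun hsum (x : X)
          simp only [Pi.add_apply, Pi.zero_apply, extendZero] at this
          rw [dif_pos x.2, dif_neg hx, add_zero] at this
          have hnx : (x : X) ∉ X₁ ∩ X₂ := fun h => hx h.2
          simp [extendZeroIn, hnx, this]
      · funext x
        by_cases hx : (x : X) ∈ X₁
        · have := congrFun hsum (x : X)
          simp only [Pi.add_apply, Pi.zero_apply, extendZero] at this
          rw [dif_pos hx, dif_pos x.2] at this
          have hmem : (x : X) ∈ X₁ ∩ X₂ := ⟨hx, x.2⟩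
          simp only [Pi.neg_apply, extendZeroIn, dif_pos hmem, Function.comp, Set.inclusion]
          exact eq_neg_of_add_eq_zero_right this
        · have hnx : (x : X) ∉ X₁ ∩ X₂ := fun h => hx h.1
          have := congrFun hsum (x : X)
          simp only [Pi.add_apply, Pi.zero_apply, extendZero] at this
          rw [dif_neg hx, dif_pos x.2, zero_add] at this
          simp [extendZeroIn, hnx, this]
    · rintro ⟨ζ, _, _, rfl, rfl⟩
      funext x
      by_cases hx₁ : x ∈ X₁ <;> by_cases hx₂ : x ∈ X₂
      · have hm : x ∈ X₁ ∩ X₂ := ⟨hx₁, hx₂⟩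
        simp [extendZero, extendZeroIn, hx₁, hx₂, hm]
      · have hm : x ∉ X₁ ∩ X₂ := fun h => hx₂ h.2
        simp [extendZero, extendZeroIn, hx₁, hx₂, hm]
      · have hm : x ∉ X₁ ∩ X₂ := fun h => hx₁ h.1
        simp [extendZero, extendZeroIn, hx₁, hx₂, hm]
      · simp [extendZero, hx₁, hx₂]
  · -- surjectivity
    intro η hc hs
    set G : X → A := X₁.piecewise 0 η with hG
    have hGc : Continuous G := by
      apply Continuous.piecewise _ continuous_zero hc
      simp [h₁.frontier_eq]
    have hGs : HasCompactSupport G := hs.mono' (by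
      intro x hx
      apply subset_tsupport
      simp only [hG, Set.piecewise, Function.mem_support, ne_eq] at hx ⊢
      intro h
      apply hx
      split <;> simp [h])
    refine ⟨η ∘ Subtype.val, G ∘ Subtype.val,
      hc.comp continuous_subtype_val,
      hs.comp_isClosedEmbedding h₁.isClosed.isClosedEmbedding_subtypeVal,
      hGc.comp continuous_subtype_val,
      hGs.comp_isClosedEmbedding h₂.isClosed.isClosedEmbedding_subtypeVal, ?_⟩
    funext x
    by_cases hx₁ : x ∈ X₁
    · have hx₂' : G x = 0 := by simp [hG, Set.piecewise, hx₁]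
      by_cases hx₂ : x ∈ X₂ <;> simp [extendZero, hx₁, hx₂, hx₂']
    · have hx₂ : x ∈ X₂ := by
        have := Set.mem_univ x; rw [← hcover] at this; exact this.resolve_left hx₁
      simp [extendZero, hx₁, hx₂, hG, Set.piecewise]
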